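/- (Necessity of the Euclidean distance profile for variance minimality) Let m₁ ≥ m₂ ≥ 1 be natural numbers, N = m₁ + m₂, ℓ = ⌊N/m₂⌋ and u = ⌈N/m₂⌉. Suppose C : ZMod N → {a₁, a₂} is an admissible cycle (fibers of sizes m₁ and m₂) that minimizes the variance among all admissible cycles, i.e., σ²(C) ≤ σ²(C') for every admissible C'. Then: every instance of a₁ has Δ_C(j) ∈ {1, 2}, with exactly m₁ − m₂ instances having Δ_C(j) = 1 and exactly m₂ having Δ_C(j) = 2; and every instance of a₂ has Δ_C(j) ∈ {ℓ, u}. In particular, the less abundant symbol a₂ is unclustered in any variance-minimizing admissible binary cycle. -/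
import Mathlib
open Finset

/-- The distance from position `j` to the next occurrence of the same symbol:
the least positive `d` with `C (j + d) = C j`. -/
noncomputable def cycleDist {N : ℕ} {A : Type*} (C : ZMod N → A) (j : ZMod N) : ℕ :=
  sInf {d : ℕ | 0 < d ∧ C (j + (d : ZMod N)) = C j}


/-- A cycle is admissible for multiplicities `m` if every fiber has the prescribed size. -/
def Admissible {N : ℕ} [NeZero N] {A : Type*} [Fintype A] [DecidableEq A]
    (m : A → ℕ) (C : ZMod N → A) : Prop :=
  ∀ a : A, (Finset.univ.filter (fun j => C j = a)).card = m a

/-- The mean of a cycle. -/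
noncomputable def cycleMean {N : ℕ} [NeZero N] {A : Type*} (C : ZMod N → A) : ℚ :=
  (∑ j : ZMod N, (cycleDist C j : ℚ)) / N

/-- The second (raw) moment of a cycle. -/
noncomputable def cycleMoment2 {N : ℕ} [NeZero N] {A : Type*} (C : ZMod N → A) : ℚ :=
  (∑ j : ZMod N, (cycleDist C j : ℚ) ^ 2) / N

/-- The variance of a cycle. -/
noncomputable def cycleVariance {N : ℕ} [NeZero N] {A : Type*} (C : ZMod N → A) : ℚ :=
  (∑ j : ZMod N, ((cycleDist C j : ℚ) - cycleMean C) ^ 2) / N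

variable {N : ℕ} [NeZero N] {A : Type*} (C : ZMod N → A) (j : ZMod N)

lemma cd_set_nonempty : {d : ℕ | 0 < d ∧ C (j + (d : ZMod N)) = C j}.Nonempty :=
  ⟨N, Nat.pos_of_ne_zero (NeZero.ne N), by simp⟩
lemma cycleDist_pos : 0 < cycleDist C j := (Nat.sInf_mem (cd_set_nonempty C j)).1
lemma cycleDist_cycle : C (j + (cycleDist C j : ZMod N)) = C j :=
  (Nat.sInf_mem (cd_set_nonempty C j)).2
omit [NeZero N] in
lemma cycleDist_le {d : ℕ} (hd : 0 < d) (h : C (j + (d : ZMod N)) = C j) :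
    cycleDist C j ≤ d := Nat.sInf_le ⟨hd, h⟩
lemma cycleDist_le_card : cycleDist C j ≤ N :=
  cycleDist_le C j (Nat.pos_of_ne_zero (NeZero.ne N)) (by simp)
omit [NeZero N] in
lemma cycleDist_min {e : ℕ} (h1 : 0 < e) (h2 : e < cycleDist C j) :
    C (j + (e : ZMod N)) ≠ C j := fun h => absurd (cycleDist_le C j h1 h) (not_le.mpr h2)
lemma cycleDist_eq {d : ℕ} (hd : 0 < d) (h : C (j + (d : ZMod N)) = C j)
    (hmin : ∀ e, 0 < e → e < d → C (j + (e : ZMod N)) ≠ C j) : cycleDist C j = d := by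
  refine le_antisymm (cycleDist_le C j hd h) ?_
  by_contra hlt
  exact hmin _ (cycleDist_pos C j) (lt_of_not_ge hlt) (cycleDist_cycle C j)

/-- Key lemma: the distances over a nonempty fiber sum to `N`. -/
lemma sum_cycleDist_fiber [DecidableEq A] (a : A) (ha : ∃ j₀ : ZMod N, C j₀ = a) :
    ∑ j ∈ univ.filter (fun j => C j = a), cycleDist C j = N := by
  classical
  obtain ⟨j₀, hj₀⟩ := ha
  -- s k : distance back to the previous occurrence of a
  set s : ZMod N → ℕ := fun k => sInf {t : ℕ | C (k - (t : ZMod N)) = a} with hs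
  have hsne : ∀ k : ZMod N, {t : ℕ | C (k - (t : ZMod N)) = a}.Nonempty := by
    intro k
    refine ⟨(k - j₀).val, ?_⟩
    simp only [Set.mem_setOf_eq, ZMod.natCast_val, ZMod.cast_id]
    rw [sub_sub_cancel]; exact hj₀
  have hsmem : ∀ k, C (k - (s k : ZMod N)) = a := fun k => Nat.sInf_mem (hsne k)
  have hsle : ∀ k (t : ℕ), C (k - (t : ZMod N)) = a → s k ≤ t := fun k t h => Nat.sInf_le h
  set φ : ZMod N → ZMod N := fun k => k - (s k : ZMod N) with hφ
  have hφmem : ∀ k, φ k ∈ univ.filter (fun j => C j = a) := by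
    intro k; simp only [mem_filter, mem_univ, true_and]; exact hsmem k
  have hcard := Finset.card_eq_sum_card_fiberwise (fun k (_ : k ∈ univ) => hφmem k)
  have hNcard : (univ : Finset (ZMod N)).card = N := by
    simp [Finset.card_univ, ZMod.card]
  rw [hNcard] at hcard
  conv_rhs => rw [hcard]
  refine Finset.sum_congr rfl ?_
  intro j hj
  have hja : C j = a := (mem_filter.mp hj).2
  -- fiber of φ over j is the image of range (cycleDist C j) under (j + ·)
  have hfib : univ.filter (fun k => φ k = j)
      = (Finset.range (cycleDist C j)).image (fun t : ℕ => j + (t : ZMod N)) := by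
    ext k
    simp only [mem_filter, mem_univ, true_and, mem_image, mem_range]
    constructor
    · intro hk
      refine ⟨s k, ?_, ?_⟩
      · -- s k < cycleDist C j
        by_contra hge
        push_neg at hge
        have hd := cycleDist_pos C j
        have h1 : C (k - ((s k - cycleDist C j : ℕ) : ZMod N)) = a := by
          have : k - ((s k - cycleDist C j : ℕ) : ZMod N)
              = j + (cycleDist C j : ZMod N) := by
            have : ((s k - cycleDist C j : ℕ) : ZMod N)
                = (s k : ZMod N) - (cycleDist C j : ZMod N) := by
              push_cast [Nat.cast_sub hge]; ring
            rw [this]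
            rw [← hk]
            simp [hφ]; ring
          rw [this, cycleDist_cycle C j]; exact hja
        have := hsle k _ h1
        omega
      · rw [← hk]; simp [hφ]
    · rintro ⟨t, ht, rfl⟩
      -- show φ (j + t) = j, i.e. s (j+t) = t
      have h1 : C ((j + (t : ZMod N)) - (t : ZMod N)) = a := by simp [hja]
      have h2 : s (j + (t : ZMod N)) ≤ t := hsle _ _ h1
      have h3 : s (j + (t : ZMod N)) = t := by
        rcases eq_or_lt_of_le h2 with h | h
        · exact h
        · exfalso
          set t' := s (j + (t : ZMod N)) with ht'
          have hmem := hsmem (j + (t : ZMod N))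
          have : (j + (t : ZMod N)) - (t' : ZMod N) = j + ((t - t' : ℕ) : ZMod N) := by
            push_cast [Nat.cast_sub (le_of_lt h)]; ring
          rw [this] at hmem
          exact cycleDist_min C j (by omega) (by omega) (hmem.trans hja.symm)
      simp [hφ, h3, hja]
  rw [hfib, Finset.card_image_of_injOn, Finset.card_range]
  intro x hx y hy hxy
  simp only [mem_coe, mem_range] at hx hy
  have hxN : x < N := lt_of_lt_of_le hx (cycleDist_le_card C j)
  have hyN : y < N := lt_of_lt_of_le hy (cycleDist_le_card C j)
  have : (x : ZMod N) = (y : ZMod N) := by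
    have := add_left_cancel hxy; exact this
  have := congrArg ZMod.val this
  rwa [ZMod.val_cast_of_lt hxN, ZMod.val_cast_of_lt hyN] at this

/-- positions of the rare symbol in the balanced cycle -/
def gfun (ℓ r i : ℕ) : ℕ := i * ℓ + min i r

open scoped Classical in
/-- the balanced ("Euclidean") binary cycle -/
noncomputable def Cstar (N ℓ r m₂ : ℕ) : ZMod N → Fin 2 :=
  fun x => if ∃ i, i < m₂ ∧ x.val = gfun ℓ r i then 1 else 0

section gprops
variable {ℓ r m₂ N : ℕ}

lemma g_lt (hℓ : 2 ≤ ℓ) {i i' : ℕ} (h : i < i') : gfun ℓ r i + 2 ≤ gfun ℓ r i' := by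
  unfold gfun
  have h1 : (i + 1) * ℓ ≤ i' * ℓ := Nat.mul_le_mul_right ℓ h
  have h2 : min i r ≤ min i' r := by omega
  have : (i + 1) * ℓ = i * ℓ + ℓ := by ring
  omega

lemma g_add_le (hr : r < m₂) (hN : N = m₂ * ℓ + r) {i : ℕ} (h : i < m₂) :
    gfun ℓ r i + ℓ ≤ N := by
  unfold gfun
  have h1 : (i + 1) * ℓ ≤ m₂ * ℓ := Nat.mul_le_mul_right ℓ h
  have : (i + 1) * ℓ = i * ℓ + ℓ := by ring
  have h2 : min i r ≤ r := by omega
  omega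

lemma g_last (hr : r < m₂) (hN : N = m₂ * ℓ + r) (hm : 1 ≤ m₂) :
    gfun ℓ r (m₂ - 1) = N - ℓ := by
  unfold gfun
  have h1 : (m₂ - 1) * ℓ + ℓ = m₂ * ℓ := by
    have : (m₂ - 1) + 1 = m₂ := by omega
    calc (m₂ - 1) * ℓ + ℓ = ((m₂ - 1) + 1) * ℓ := by ring
    _ = m₂ * ℓ := by rw [this]
  have h2 : min (m₂ - 1) r = r := by omega
  omega

lemma Cstar_eq_one_iff {x : ZMod N} :
    Cstar N ℓ r m₂ x = 1 ↔ ∃ i, i < m₂ ∧ x.val = gfun ℓ r i := by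
  unfold Cstar
  split
  · simpa
  · next h => simp only [h, iff_false]; decide

lemma Cstar_eq_zero_iff {x : ZMod N} :
    Cstar N ℓ r m₂ x = 0 ↔ ¬ ∃ i, i < m₂ ∧ x.val = gfun ℓ r i := by
  unfold Cstar
  split
  · next h => simp only [h, not_true, iff_false]; decide
  · next h => simp only [h, not_false_iff, iff_true]

end gprops

section cstarprops
variable {ℓ r m₂ N : ℕ} [NeZero N]
  (hℓ : 2 ≤ ℓ) (hr : r < m₂) (hm : 1 ≤ m₂) (hN : N = m₂ * ℓ + r)

lemma val_add_nat {j : ZMod N} {e : ℕ} (h : j.val + e < N) :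
    (j + (e : ZMod N)).val = j.val + e := by
  rw [ZMod.val_add, ZMod.val_cast_of_lt (by omega : e < N), Nat.mod_eq_of_lt h]

lemma add_nat_eq_zero {j : ZMod N} {e : ℕ} (h : j.val + e = N) :
    j + (e : ZMod N) = 0 := by
  have hj : ((j.val : ℕ) : ZMod N) = j := by simp [ZMod.natCast_val, ZMod.cast_id]
  rw [← hj, ← Nat.cast_add, h, ZMod.natCast_self]

include hℓ hr hm hN in
/-- distance at a rare-symbol position of the balanced cycle -/
lemma cycleDist_Cstar_one {j : ZMod N} (hj : Cstar N ℓ r m₂ j = 1) :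
    cycleDist (Cstar N ℓ r m₂) j = ℓ ∨ cycleDist (Cstar N ℓ r m₂) j = ℓ + 1 := by
  obtain ⟨i, him, hival⟩ := Cstar_eq_one_iff.mp hj
  by_cases hlast : i + 1 < m₂
  · -- next occurrence at gfun (i+1)
    set d := gfun ℓ r (i + 1) - gfun ℓ r i with hd
    have hstep : gfun ℓ r i + 2 ≤ gfun ℓ r (i + 1) := g_lt hℓ (Nat.lt_succ_self i)
    have hstepu : gfun ℓ r (i + 1) ≤ gfun ℓ r i + ℓ + 1 := by
      unfold gfun
      have : (i + 1) * ℓ = i * ℓ + ℓ := by ring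
      omega
    have hdl : ℓ ≤ d := by
      have e1 : gfun ℓ r (i + 1) = (i + 1) * ℓ + min (i + 1) r := rfl
      have e2 : gfun ℓ r i = i * ℓ + min i r := rfl
      have h3 : (i + 1) * ℓ = i * ℓ + ℓ := by ring
      omega
    have hdu : d ≤ ℓ + 1 := by omega
    have hfits : gfun ℓ r (i + 1) < N := by
      have := g_add_le hr hN hlast; omega
    have hcd : cycleDist (Cstar N ℓ r m₂) j = d := by
      apply cycleDist_eq
      · omega
      · rw [hj, Cstar_eq_one_iff]
        refine ⟨i + 1, hlast, ?_⟩
        rw [val_add_nat (by omega)]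
        omega
      · intro e he hed
        rw [hj]
        intro hcon
        obtain ⟨i', hi'm, hi'⟩ := Cstar_eq_one_iff.mp hcon
        rw [val_add_nat (by omega)] at hi'
        rcases lt_or_ge i' (i + 1) with hc | hc
        · rcases eq_or_lt_of_le (Nat.lt_succ_iff.mp hc) with hc2 | hc2
          · subst hc2; omega
          · have := g_lt (r := r) hℓ hc2; omega
        · have : gfun ℓ r (i + 1) ≤ gfun ℓ r i' := by
            rcases eq_or_lt_of_le hc with hc2 | hc2
            · rw [hc2]
            · have := g_lt (r := r) hℓ hc2; omega
          omega
    omega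
  · -- i = m₂ - 1, wrap around to gfun 0 = 0
    have hieq : i = m₂ - 1 := by omega
    have hval : j.val = N - ℓ := by rw [hival, hieq, g_last hr hN hm]
    have hNℓ : ℓ ≤ N := by
      have := g_add_le hr hN him; omega
    left
    apply cycleDist_eq
    · omega
    · rw [hj, Cstar_eq_one_iff]
      have h0 : j + ((ℓ : ℕ) : ZMod N) = 0 := add_nat_eq_zero (by omega)
      rw [h0]
      exact ⟨0, by omega, by simp [gfun, ZMod.val_zero]⟩
    · intro e he hed
      rw [hj]
      intro hcon
      obtain ⟨i', hi'm, hi'⟩ := Cstar_eq_one_iff.mp hcon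
      rw [val_add_nat (by omega)] at hi'
      -- (j+e).val = N - ℓ + e > N - ℓ ≥ every gfun value
      have hle : gfun ℓ r i' + ℓ ≤ N := g_add_le hr hN hi'm
      omega

include hℓ hr hm hN in
/-- no two cyclically adjacent rare-symbol positions -/
lemma Cstar_no_adjacent {p : ZMod N} (hp : Cstar N ℓ r m₂ p = 1) :
    Cstar N ℓ r m₂ (p + ((1 : ℕ) : ZMod N)) = 0 := by
  obtain ⟨i, him, hival⟩ := Cstar_eq_one_iff.mp hp
  have hle : gfun ℓ r i + ℓ ≤ N := g_add_le hr hN him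
  rw [Cstar_eq_zero_iff]
  rintro ⟨i', hi'm, hi'⟩
  rw [val_add_nat (by omega)] at hi'
  rcases lt_trichotomy i' i with hc | hc | hc
  · have := g_lt (r := r) hℓ hc; omega
  · subst hc; omega
  · have := g_lt (r := r) hℓ hc; omega

include hℓ hr hm hN in
/-- distance at an abundant-symbol position of the balanced cycle -/
lemma cycleDist_Cstar_zero {j : ZMod N} (hj : Cstar N ℓ r m₂ j = 0) :
    cycleDist (Cstar N ℓ r m₂) j = 1 ∨ cycleDist (Cstar N ℓ r m₂) j = 2 := by
  have fin2 : ∀ v : Fin 2, v = 0 ∨ v = 1 := by decide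
  rcases fin2 (Cstar N ℓ r m₂ (j + ((1 : ℕ) : ZMod N))) with h1 | h1
  · left
    apply cycleDist_eq
    · omega
    · rw [h1, hj]
    · omega
  · right
    apply cycleDist_eq
    · omega
    · have h2 : Cstar N ℓ r m₂ (j + ((1 : ℕ) : ZMod N) + ((1 : ℕ) : ZMod N)) = 0 :=
        Cstar_no_adjacent hℓ hr hm hN h1
      have : j + ((2 : ℕ) : ZMod N) = j + ((1 : ℕ) : ZMod N) + ((1 : ℕ) : ZMod N) := by
        push_cast; ring
      rw [this, h2, hj]
    · intro e he hed
      have : e = 1 := by omega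
      subst this
      rw [h1, hj]
      decide

end cstarprops

section cstarcard
variable {ℓ r m₂ N : ℕ} [NeZero N]
  (hℓ : 2 ≤ ℓ) (hr : r < m₂) (hm : 1 ≤ m₂) (hN : N = m₂ * ℓ + r)

include hℓ hr hm hN in
lemma Cstar_card_one :
    (univ.filter (fun j : ZMod N => Cstar N ℓ r m₂ j = 1)).card = m₂ := by
  classical
  have hfib : univ.filter (fun j : ZMod N => Cstar N ℓ r m₂ j = 1)
      = (Finset.range m₂).image (fun i : ℕ => ((gfun ℓ r i : ℕ) : ZMod N)) := by
    ext x
    simp only [mem_filter, mem_univ, true_and, mem_image, mem_range, Cstar_eq_one_iff]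
    constructor
    · rintro ⟨i, him, hx⟩
      refine ⟨i, him, ?_⟩
      have hj : ((x.val : ℕ) : ZMod N) = x := by simp [ZMod.natCast_val, ZMod.cast_id]
      rw [← hj, hx]
    · rintro ⟨i, him, rfl⟩
      have hlt : gfun ℓ r i < N := by have := g_add_le hr hN him; omega
      exact ⟨i, him, ZMod.val_cast_of_lt hlt⟩
  rw [hfib, Finset.card_image_of_injOn, Finset.card_range]
  intro x hx y hy hxy
  simp only [mem_coe, mem_range] at hx hy
  have hxl : gfun ℓ r x < N := by have := g_add_le hr hN hx; omega
  have hyl : gfun ℓ r y < N := by have := g_add_le hr hN hy; omega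
  have := congrArg ZMod.val hxy
  rw [ZMod.val_cast_of_lt hxl, ZMod.val_cast_of_lt hyl] at this
  by_contra hne
  rcases Nat.lt_or_ge x y with hc | hc
  · have := g_lt (r := r) hℓ hc; omega
  · have hc2 : y < x := by omega
    have := g_lt (r := r) hℓ hc2; omega

include hℓ hr hm hN in
lemma Cstar_card_zero :
    (univ.filter (fun j : ZMod N => Cstar N ℓ r m₂ j = 0)).card = N - m₂ := by
  classical
  have fin2 : ∀ v : Fin 2, (v = 0) = ¬ (v = 1) := by decide
  have h1 : univ.filter (fun j : ZMod N => Cstar N ℓ r m₂ j = 0)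
      = univ.filter (fun j : ZMod N => ¬ Cstar N ℓ r m₂ j = 1) := by
    apply Finset.filter_congr; intro j _; rw [fin2]
  rw [h1, Finset.filter_not, Finset.card_sdiff_of_subset (Finset.filter_subset _ _),
    Cstar_card_one hℓ hr hm hN]
  simp [Finset.card_univ, ZMod.card]

end cstarcard

/-- tangent line inequality for the square function at the integer gap `a`,`a+1` -/
lemma tangent_le (a d : ℕ) : ((2 * a + 1 : ℚ)) * d - a * (a + 1) ≤ (d : ℚ) ^ 2 := by
  rcases le_or_gt d a with h | h
  · have h1 : (d : ℚ) ≤ a := by exact_mod_cast h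
    have h2 : (0 : ℚ) ≤ d := by positivity
    nlinarith
  · have h1 : (a : ℚ) + 1 ≤ d := by exact_mod_cast h
    nlinarith

lemma tangent_exact {a d : ℕ} (h : d = a ∨ d = a + 1) :
    (d : ℚ) ^ 2 = (2 * a + 1 : ℚ) * d - a * (a + 1) := by
  rcases h with rfl | rfl <;> push_cast <;> ring

lemma tangent_eq_iff {a d : ℕ} (h : (d : ℚ) ^ 2 = (2 * a + 1 : ℚ) * d - a * (a + 1)) :
    d = a ∨ d = a + 1 := by
  have h2 : ((d : ℚ) - a) * ((d : ℚ) - (a + 1)) = 0 := by linear_combination h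
  rcases mul_eq_zero.mp h2 with h3 | h3
  · left; have : (d : ℚ) = a := by linarith
    exact_mod_cast this
  · right; have : (d : ℚ) = a + 1 := by linarith
    exact_mod_cast this

/-- sum of squares of an `{a, a+1}`-valued profile, in terms of its sum and count -/
lemma sum_sq_of_profile {α : Type*} (S : Finset α) (d : α → ℕ) (a n m : ℕ)
    (hprof : ∀ x ∈ S, d x = a ∨ d x = a + 1)
    (hsum : ∑ x ∈ S, d x = n) (hcard : S.card = m) :
    ∑ x ∈ S, (d x : ℚ) ^ 2 = (2 * a + 1 : ℚ) * n - a * (a + 1) * m := by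
  have h1 : ∑ x ∈ S, (d x : ℚ) ^ 2
      = ∑ x ∈ S, ((2 * a + 1 : ℚ) * d x - a * (a + 1)) :=
    Finset.sum_congr rfl (fun x hx => tangent_exact (hprof x hx))
  have h2 : ∑ x ∈ S, (d x : ℚ) = n := by
    rw [← Nat.cast_sum, hsum]
  rw [h1, Finset.sum_sub_distrib, ← Finset.mul_sum, h2, Finset.sum_const, hcard]
  push_cast; ring

section binary
variable {N : ℕ} [NeZero N]

lemma fin2_cases (v : Fin 2) : v = 0 ∨ v = 1 := by omega

/-- sums of distances over the two fibers and in total, for an admissible binary cycle -/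
lemma binary_sums {m₁ m₂ : ℕ} (hm1 : 1 ≤ m₁) (hm2 : 1 ≤ m₂)
    (C : ZMod N → Fin 2) (hC : Admissible ![m₁, m₂] C) :
    (∑ j ∈ univ.filter (fun j => C j = 0), cycleDist C j = N) ∧
    (∑ j ∈ univ.filter (fun j => C j = 1), cycleDist C j = N) ∧
    (∑ j : ZMod N, cycleDist C j = 2 * N) := by
  classical
  have h0card : (univ.filter (fun j => C j = 0)).card = m₁ := by
    have := hC 0; simpa using this
  have h1card : (univ.filter (fun j => C j = 1)).card = m₂ := by
    have := hC 1; simpa using this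
  have h0ne : ∃ j, C j = 0 := by
    have : (univ.filter (fun j => C j = 0)).Nonempty := by
      rw [← Finset.card_pos, h0card]; omega
    obtain ⟨j, hj⟩ := this; exact ⟨j, (mem_filter.mp hj).2⟩
  have h1ne : ∃ j, C j = 1 := by
    have : (univ.filter (fun j => C j = 1)).Nonempty := by
      rw [← Finset.card_pos, h1card]; omega
    obtain ⟨j, hj⟩ := this; exact ⟨j, (mem_filter.mp hj).2⟩
  have hs0 := sum_cycleDist_fiber C 0 h0ne
  have hs1 := sum_cycleDist_fiber C 1 h1ne
  refine ⟨hs0, hs1, ?_⟩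
  have hsplit := Finset.sum_filter_add_sum_filter_not univ
    (fun j => C j = 0) (fun j => cycleDist C j)
  have hnot : univ.filter (fun j => ¬ C j = 0) = univ.filter (fun j => C j = 1) := by
    apply Finset.filter_congr
    intro j _
    rcases fin2_cases (C j) with h | h <;> simp [h]
  rw [hnot, hs0, hs1] at hsplit
  omega

/-- the variance of an admissible binary cycle in terms of the sum of squared distances -/
lemma binary_variance {m₁ m₂ : ℕ} (hm1 : 1 ≤ m₁) (hm2 : 1 ≤ m₂)
    (C : ZMod N → Fin 2) (hC : Admissible ![m₁, m₂] C) :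
    cycleVariance C = (∑ j : ZMod N, (cycleDist C j : ℚ) ^ 2) / N - 4 := by
  have hNQ : (N : ℚ) ≠ 0 := Nat.cast_ne_zero.mpr (NeZero.ne N)
  have htot : ∑ j : ZMod N, (cycleDist C j : ℚ) = 2 * N := by
    rw [← Nat.cast_sum, (binary_sums hm1 hm2 C hC).2.2]; push_cast; ring
  have hmean : cycleMean C = 2 := by
    rw [cycleMean, htot]; field_simp
  rw [cycleVariance, hmean]
  have hexp : ∑ j : ZMod N, ((cycleDist C j : ℚ) - 2) ^ 2
      = ∑ j : ZMod N, (cycleDist C j : ℚ) ^ 2 - 4 * ∑ j : ZMod N, (cycleDist C j : ℚ)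
        + 4 * N := by
    rw [Finset.sum_congr rfl (fun j _ => by ring :
      ∀ j ∈ univ, ((cycleDist C j : ℚ) - 2) ^ 2
        = (cycleDist C j : ℚ) ^ 2 - 4 * (cycleDist C j : ℚ) + 4)]
    rw [Finset.sum_add_distrib, Finset.sum_sub_distrib, ← Finset.mul_sum,
      Finset.sum_const, Finset.card_univ, ZMod.card]
    push_cast; ring
  rw [hexp, htot]
  field_simp
  ring

end binary

lemma sum_tangent {α : Type*} (S : Finset α) (d : α → ℕ) (a n m : ℕ)
    (hsum : ∑ x ∈ S, d x = n) (hcard : S.card = m) :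
    ∑ x ∈ S, ((2 * a + 1 : ℚ) * d x - a * (a + 1)) = (2 * a + 1 : ℚ) * n - a * (a + 1) * m := by
  have h2 : ∑ x ∈ S, (d x : ℚ) = n := by rw [← Nat.cast_sum, hsum]
  rw [Finset.sum_sub_distrib, ← Finset.mul_sum, h2, Finset.sum_const, hcard]
  push_cast
  ring

lemma binary_split {N : ℕ} [NeZero N] {M : Type*} [AddCommMonoid M]
    (C : ZMod N → Fin 2) (f : ZMod N → M) :
    ∑ j : ZMod N, f j
      = ∑ j ∈ univ.filter (fun j => C j = 0), f j
        + ∑ j ∈ univ.filter (fun j => C j = 1), f j := by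
  classical
  rw [← Finset.sum_filter_add_sum_filter_not univ (fun j => C j = 0) f]
  congr 1
  apply Finset.sum_congr _ (fun _ _ => rfl)
  apply Finset.filter_congr
  intro j _
  rcases fin2_cases (C j) with h | h <;> simp [h]

/-- Necessity of the Euclidean distance profile for variance minimality: any
variance-minimizing admissible binary cycle has every instance of `a₁` at distance 1 or 2
(with exactly `m₁ − m₂` at distance 1 and `m₂` at distance 2), every instance of `a₂` at
distance `ℓ = ⌊N/m₂⌋` or `u = ⌈N/m₂⌉`; in particular `a₂` is unclustered. -/
theorem necessity_euclid_profile (m₁ m₂ : ℕ) (h2 : 1 ≤ m₂) (h12 : m₂ ≤ m₁)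
    (N : ℕ) (hN : N = m₁ + m₂) [NeZero N]
    (ℓ u : ℕ) (hℓ : ℓ = N / m₂) (hu : u = (N + m₂ - 1) / m₂)
    (C : ZMod N → Fin 2) (hC : Admissible ![m₁, m₂] C)
    (hmin : ∀ C' : ZMod N → Fin 2, Admissible ![m₁, m₂] C' →
      cycleVariance C ≤ cycleVariance C') :
    (∀ j : ZMod N, C j = 0 → cycleDist C j = 1 ∨ cycleDist C j = 2) ∧
    (Finset.univ.filter (fun j => C j = 0 ∧ cycleDist C j = 1)).card = m₁ - m₂ ∧
    (Finset.univ.filter (fun j => C j = 0 ∧ cycleDist C j = 2)).card = m₂ ∧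
    (∀ j : ZMod N, C j = 1 → cycleDist C j = ℓ ∨ cycleDist C j = u) ∧
    (∀ j : ZMod N, C j = 1 → 1 < cycleDist C j) := by
  classical
  have hm1 : 1 ≤ m₁ := le_trans h2 h12
  set r := N % m₂ with hrdef
  have hℓN : N = m₂ * ℓ + r := by rw [hℓ, hrdef]; exact (Nat.div_add_mod N m₂).symm
  have hrm : r < m₂ := Nat.mod_lt _ h2
  have hℓ2 : 2 ≤ ℓ := by
    rw [hℓ, Nat.le_div_iff_mul_le h2]
    omega
  have hu' : (r = 0 ∧ u = ℓ) ∨ (0 < r ∧ u = ℓ + 1) := by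
    rcases Nat.eq_zero_or_pos r with h | h
    · refine Or.inl ⟨h, ?_⟩
      rw [hu, show N + m₂ - 1 = m₂ * ℓ + (m₂ - 1) by omega,
        Nat.mul_add_div h2, Nat.div_eq_of_lt (by omega)]
      omega
    · refine Or.inr ⟨h, ?_⟩
      rw [hu, show N + m₂ - 1 = m₂ * (ℓ + 1) + (r - 1) by
          have : m₂ * (ℓ + 1) = m₂ * ℓ + m₂ := by ring
          omega,
        Nat.mul_add_div h2, Nat.div_eq_of_lt (by omega)]
  -- the balanced cycle is admissible
  have hC'adm : Admissible ![m₁, m₂] (Cstar N ℓ r m₂) := by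
    intro a
    rcases fin2_cases a with rfl | rfl
    · have h := Cstar_card_zero hℓ2 hrm h2 hℓN
      simp only [Matrix.cons_val_zero]
      omega
    · have h := Cstar_card_one hℓ2 hrm h2 hℓN
      simpa using h
  -- fibers of C and C'
  set F0 := univ.filter (fun j => C j = 0) with hF0
  set F1 := univ.filter (fun j => C j = 1) with hF1
  have hF0card : F0.card = m₁ := by simpa using hC 0
  have hF1card : F1.card = m₂ := by simpa using hC 1
  obtain ⟨hs0, hs1, -⟩ := binary_sums hm1 h2 C hC
  have hG0card : (univ.filter (fun j => Cstar N ℓ r m₂ j = 0)).card = m₁ := by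
    simpa using hC'adm 0
  have hG1card : (univ.filter (fun j => Cstar N ℓ r m₂ j = 1)).card = m₂ := by
    simpa using hC'adm 1
  obtain ⟨hgs0, hgs1, -⟩ := binary_sums hm1 h2 _ hC'adm
  -- sum of squares of the balanced cycle
  have hsqC' : ∑ j : ZMod N, (cycleDist (Cstar N ℓ r m₂) j : ℚ) ^ 2
      = ((2 * 1 + 1 : ℚ) * N - 1 * (1 + 1) * m₁)
        + ((2 * ℓ + 1 : ℚ) * N - ℓ * (ℓ + 1) * m₂) := by
    rw [binary_split (Cstar N ℓ r m₂)]
    congr 1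
    · refine sum_sq_of_profile _ _ 1 N m₁ ?_ hgs0 hG0card
      intro x hx
      exact cycleDist_Cstar_zero hℓ2 hrm h2 hℓN (mem_filter.mp hx).2
    · refine sum_sq_of_profile _ _ ℓ N m₂ ?_ hgs1 hG1card
      intro x hx
      exact cycleDist_Cstar_one hℓ2 hrm h2 hℓN (mem_filter.mp hx).2
  -- comparison of the sums of squares
  have hNQ : (0 : ℚ) < N := by
    exact_mod_cast Nat.pos_of_ne_zero (NeZero.ne N)
  have hsumle : ∑ j : ZMod N, (cycleDist C j : ℚ) ^ 2
      ≤ ∑ j : ZMod N, (cycleDist (Cstar N ℓ r m₂) j : ℚ) ^ 2 := by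
    have hv := hmin (Cstar N ℓ r m₂) hC'adm
    rw [binary_variance hm1 h2 C hC, binary_variance hm1 h2 _ hC'adm] at hv
    have h := sub_le_sub_iff_right (4 : ℚ) |>.mp hv
    exact (div_le_div_iff_of_pos_right hNQ).mp h
  -- tangent sums for C
  have hT0 : ∑ j ∈ F0, ((2 * 1 + 1 : ℚ) * cycleDist C j - 1 * (1 + 1))
      = (2 * 1 + 1 : ℚ) * N - 1 * (1 + 1) * m₁ := sum_tangent _ _ 1 N m₁ hs0 hF0card
  have hT1 : ∑ j ∈ F1, ((2 * ℓ + 1 : ℚ) * cycleDist C j - ℓ * (ℓ + 1))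
      = (2 * ℓ + 1 : ℚ) * N - ℓ * (ℓ + 1) * m₂ := sum_tangent _ _ ℓ N m₂ hs1 hF1card
  have hsplitC := binary_split C (fun j => (cycleDist C j : ℚ) ^ 2)
  -- the two excess sums are nonnegative and sum to ≤ 0, hence vanish termwise
  have hE0nonneg : ∀ j ∈ F0, 0 ≤ (cycleDist C j : ℚ) ^ 2
      - ((2 * 1 + 1 : ℚ) * cycleDist C j - 1 * (1 + 1)) :=
    fun j _ => sub_nonneg.mpr (tangent_le 1 _)
  have hE1nonneg : ∀ j ∈ F1, 0 ≤ (cycleDist C j : ℚ) ^ 2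
      - ((2 * ℓ + 1 : ℚ) * cycleDist C j - ℓ * (ℓ + 1)) :=
    fun j _ => sub_nonneg.mpr (tangent_le ℓ _)
  have hE0sum : ∑ j ∈ F0, ((cycleDist C j : ℚ) ^ 2
      - ((2 * 1 + 1 : ℚ) * cycleDist C j - 1 * (1 + 1))) = 0 := by
    have hs : 0 ≤ ∑ j ∈ F0, ((cycleDist C j : ℚ) ^ 2
        - ((2 * 1 + 1 : ℚ) * cycleDist C j - 1 * (1 + 1))) := Finset.sum_nonneg hE0nonneg
    have hs' : 0 ≤ ∑ j ∈ F1, ((cycleDist C j : ℚ) ^ 2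
        - ((2 * ℓ + 1 : ℚ) * cycleDist C j - ℓ * (ℓ + 1))) := Finset.sum_nonneg hE1nonneg
    rw [Finset.sum_sub_distrib] at hs hs' ⊢
    rw [hT0]
    rw [hT0] at hs
    rw [hT1] at hs'
    rw [hsplitC, hsqC'] at hsumle
    linarith
  have hE1sum : ∑ j ∈ F1, ((cycleDist C j : ℚ) ^ 2
      - ((2 * ℓ + 1 : ℚ) * cycleDist C j - ℓ * (ℓ + 1))) = 0 := by
    have hs : 0 ≤ ∑ j ∈ F0, ((cycleDist C j : ℚ) ^ 2
        - ((2 * 1 + 1 : ℚ) * cycleDist C j - 1 * (1 + 1))) := Finset.sum_nonneg hE0nonneg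
    have hs' : 0 ≤ ∑ j ∈ F1, ((cycleDist C j : ℚ) ^ 2
        - ((2 * ℓ + 1 : ℚ) * cycleDist C j - ℓ * (ℓ + 1))) := Finset.sum_nonneg hE1nonneg
    rw [Finset.sum_sub_distrib] at hs hs' ⊢
    rw [hT1]
    rw [hT0] at hs
    rw [hT1] at hs'
    rw [hsplitC, hsqC'] at hsumle
    linarith
  have hprof0 : ∀ j ∈ F0, cycleDist C j = 1 ∨ cycleDist C j = 2 := by
    intro j hj
    have h := (Finset.sum_eq_zero_iff_of_nonneg hE0nonneg).mp hE0sum j hj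
    have h' := sub_eq_zero.mp h
    have h'' : cycleDist C j = 1 ∨ cycleDist C j = 1 + 1 :=
      tangent_eq_iff (a := 1) (by push_cast; push_cast at h'; linarith)
    omega
  have hprof1 : ∀ j ∈ F1, cycleDist C j = ℓ ∨ cycleDist C j = ℓ + 1 := by
    intro j hj
    have h := (Finset.sum_eq_zero_iff_of_nonneg hE1nonneg).mp hE1sum j hj
    exact tangent_eq_iff (a := ℓ) (sub_eq_zero.mp h)
  -- counts for the abundant symbol
  have hc1 : (F0.filter (fun j => cycleDist C j = 1)).card
      + (F0.filter (fun j => ¬ cycleDist C j = 1)).card = m₁ := by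
    rw [Finset.card_filter_add_card_filter_not, hF0card]
  have hA2eq : F0.filter (fun j => ¬ cycleDist C j = 1)
      = F0.filter (fun j => cycleDist C j = 2) := by
    apply Finset.filter_congr
    intro j hj
    have := hprof0 j hj
    constructor <;> intro <;> omega
  have hsum01 : ∑ j ∈ F0.filter (fun j => cycleDist C j = 1), cycleDist C j
      + ∑ j ∈ F0.filter (fun j => ¬ cycleDist C j = 1), cycleDist C j = N := by
    rw [Finset.sum_filter_add_sum_filter_not, hs0]
  have hv1 : ∑ j ∈ F0.filter (fun j => cycleDist C j = 1), cycleDist C j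
      = (F0.filter (fun j => cycleDist C j = 1)).card * 1 := by
    rw [Finset.sum_eq_card_nsmul (fun x hx => (mem_filter.mp hx).2)]
    simp
  have hv2 : ∑ j ∈ F0.filter (fun j => ¬ cycleDist C j = 1), cycleDist C j
      = (F0.filter (fun j => ¬ cycleDist C j = 1)).card * 2 := by
    rw [Finset.sum_eq_card_nsmul (b := 2) (fun x hx => by
      have h1 := (mem_filter.mp hx).2
      have := hprof0 x (mem_filter.mp hx).1
      omega)]
    simp [mul_comm]
  have hcards : (F0.filter (fun j => cycleDist C j = 1)).card = m₁ - m₂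
      ∧ (F0.filter (fun j => ¬ cycleDist C j = 1)).card = m₂ := by
    constructor <;> omega
  refine ⟨?_, ?_, ?_, ?_, ?_⟩
  · intro j hj
    exact hprof0 j (mem_filter.mpr ⟨mem_univ j, hj⟩)
  · rw [← Finset.filter_filter]
    exact hcards.1
  · rw [← Finset.filter_filter]
    rw [← hA2eq]
    exact hcards.2
  · rcases hu' with ⟨hr0, hueq⟩ | ⟨hrpos, hueq⟩
    · -- r = 0 : all distances are exactly ℓ
      -- count the (ℓ+1)-distances: there are r = 0 of them
      have hc1' : (F1.filter (fun j => cycleDist C j = ℓ)).card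
          + (F1.filter (fun j => ¬ cycleDist C j = ℓ)).card = m₂ := by
        rw [Finset.card_filter_add_card_filter_not, hF1card]
      have hw1 : ∑ j ∈ F1.filter (fun j => cycleDist C j = ℓ), cycleDist C j
          = (F1.filter (fun j => cycleDist C j = ℓ)).card * ℓ := by
        rw [Finset.sum_eq_card_nsmul (fun x hx => (mem_filter.mp hx).2)]
        simp [mul_comm]
      have hw2 : ∑ j ∈ F1.filter (fun j => ¬ cycleDist C j = ℓ), cycleDist C j
          = (F1.filter (fun j => ¬ cycleDist C j = ℓ)).card * (ℓ + 1) := by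
        rw [Finset.sum_eq_card_nsmul (b := ℓ + 1) (fun x hx => by
          have h1 := (mem_filter.mp hx).2
          have := hprof1 x (mem_filter.mp hx).1
          omega)]
        simp [mul_comm]
      have hsum1 : ∑ j ∈ F1.filter (fun j => cycleDist C j = ℓ), cycleDist C j
          + ∑ j ∈ F1.filter (fun j => ¬ cycleDist C j = ℓ), cycleDist C j = N := by
        rw [Finset.sum_filter_add_sum_filter_not, hs1]
      rw [hw1, hw2] at hsum1
      set c1 := (F1.filter (fun j => cycleDist C j = ℓ)).card
      set c2 := (F1.filter (fun j => ¬ cycleDist C j = ℓ)).card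
      have hcc : c1 * ℓ + c2 * (ℓ + 1) = (c1 + c2) * ℓ + c2 := by ring
      rw [hcc, hc1'] at hsum1
      have hc2zero : c2 = 0 := by omega
      intro j hj
      left
      by_contra hne
      have hmem : j ∈ F1.filter (fun j => ¬ cycleDist C j = ℓ) :=
        mem_filter.mpr ⟨mem_filter.mpr ⟨mem_univ j, hj⟩, hne⟩
      have := Finset.card_pos.mpr ⟨j, hmem⟩
      omega
    · intro j hj
      rw [hueq]
      exact hprof1 j (mem_filter.mpr ⟨mem_univ j, hj⟩)
  · intro j hj
    have := hprof1 j (mem_filter.mpr ⟨mem_univ j, hj⟩)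
    omega
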